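/- Let (ω_n)_{n≥1} be a sequence of nonnegative reals with ω_n → ∞. Then there exists an entire function f with |f^{(n)}(0)| ≤ ω_n for all n ≥ 1, and there exist sets A, B ⊆ ℕ both of upper density 1 such that: (i) for every m ∈ ℕ, sup_{|z|≤m}|f^{(n)}(z)| → 0 as n → ∞ along n ∈ A, and (ii) for every m ∈ ℕ, sup_{|z|≤m}|f^{(n)}(z)| → ∞ as n → ∞ along n ∈ B. -/

import Mathlib

open Filter Metric

open scoped Classical in
/-- The upper density of a set of natural numbers. -/
noncomputable def upperDensity (A : Set ℕ) : ℝ :=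
  Filter.limsup (fun N : ℕ => (((Finset.Icc 1 N).filter (· ∈ A)).card : ℝ) / N) Filter.atTop

/-- The sup of `‖f‖` over the closed ball of radius `m` centered at `0`. -/
noncomputable def supD (f : ℂ → ℂ) (m : ℝ) : ℝ :=
  sSup ((fun z => ‖f z‖) '' Metric.closedBall (0:ℂ) m)



noncomputable def Fser (β : ℕ → ℝ) (z : ℂ) : ℂ :=
  ∑' i : ℕ, (β i : ℂ) * z ^ i / (Nat.factorial i : ℂ)

lemma term_norm (β : ℕ → ℝ) (z : ℂ) (i : ℕ) :
    ‖(β i : ℂ) * z ^ i / (Nat.factorial i : ℂ)‖ = |β i| * ‖z‖ ^ i / (Nat.factorial i : ℝ) := by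
  rw [norm_div, norm_mul, norm_pow, Complex.norm_real, Real.norm_eq_abs]
  norm_num [Complex.norm_natCast]

lemma summable_aux (x : ℝ) : Summable (fun i : ℕ => (i : ℝ) * x ^ i / (Nat.factorial i : ℝ)) := by
  rw [← summable_nat_add_iff 1]
  have : (fun i : ℕ => ((i + 1 : ℕ) : ℝ) * x ^ (i + 1) / (Nat.factorial (i + 1) : ℝ))
      = fun i : ℕ => x * (x ^ i / (Nat.factorial i : ℝ)) := by
    funext i
    rw [Nat.factorial_succ, pow_succ]
    push_cast
    have h1 : (Nat.factorial i : ℝ) ≠ 0 := Nat.cast_ne_zero.2 (Nat.factorial_ne_zero i)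
    field_simp
  rw [this]
  exact (Real.summable_pow_div_factorial x).mul_left x

lemma summable_term (β : ℕ → ℝ) (C : ℝ) (hβ : ∀ i, |β i| ≤ C * 2 ^ i) (z : ℂ) :
    Summable (fun i : ℕ => (β i : ℂ) * z ^ i / (Nat.factorial i : ℂ)) := by
  apply Summable.of_norm_bounded (g := fun i : ℕ => C * (2 * ‖z‖) ^ i / (Nat.factorial i : ℝ))
  · have := (Real.summable_pow_div_factorial (2 * ‖z‖)).mul_left C
    simpa [mul_div_assoc] using this
  · intro i
    rw [term_norm]
    apply div_le_div_of_nonneg_right ?_ (by positivity)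
    calc |β i| * ‖z‖ ^ i ≤ (C * 2 ^ i) * ‖z‖ ^ i :=
          mul_le_mul_of_nonneg_right (hβ i) (by positivity)
      _ = C * (2 * ‖z‖) ^ i := by rw [mul_pow]; ring

lemma fser_hasDerivAt (β : ℕ → ℝ) (C : ℝ) (hβ : ∀ i, |β i| ≤ C * 2 ^ i) (z : ℂ) :
    HasDerivAt (Fser β) (Fser (fun i => β (i + 1)) z) z := by
  have hC : 0 ≤ C := by
    have := hβ 0; have := abs_nonneg (β 0); simp at this ⊢; nlinarith [abs_nonneg (β 0), hβ 0]
  set R : ℝ := ‖z‖ + 1 with hR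
  have hR1 : (1:ℝ) ≤ R := by nlinarith [norm_nonneg z]
  set g : ℕ → ℂ → ℂ := fun i y => (β i : ℂ) * y ^ i / (Nat.factorial i : ℂ) with hg
  set g' : ℕ → ℂ → ℂ := fun i y => (β i : ℂ) * ((i : ℂ) * y ^ (i - 1)) / (Nat.factorial i : ℂ)
    with hg'
  set u : ℕ → ℝ := fun i => C * (i : ℝ) * (2 * R) ^ i / (Nat.factorial i : ℝ) with hu
  have hu_sum : Summable u := by
    have := (summable_aux (2 * R)).mul_left C
    apply this.congr; intro i; simp [hu]; ring
  have hgd : ∀ i : ℕ, ∀ y : ℂ, y ∈ Metric.ball (0:ℂ) R → HasDerivAt (g i) (g' i y) y := by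
    intro i y _
    have h1 : HasDerivAt (fun w : ℂ => w ^ i) ((i : ℂ) * y ^ (i - 1)) y := hasDerivAt_pow i y
    simpa [hg, hg', mul_div_assoc] using ((h1.const_mul (β i : ℂ)).div_const (Nat.factorial i : ℂ))
  have hbound : ∀ i : ℕ, ∀ y : ℂ, y ∈ Metric.ball (0:ℂ) R → ‖g' i y‖ ≤ u i := by
    intro i y hy
    simp only [mem_ball, dist_zero_right] at hy
    have : ‖g' i y‖ = |β i| * ((i : ℝ) * ‖y‖ ^ (i - 1)) / (Nat.factorial i : ℝ) := by
      simp [hg', norm_div, norm_mul, norm_pow, Complex.norm_real, Real.norm_eq_abs,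
        Complex.norm_natCast]
    rw [this, hu]
    apply div_le_div_of_nonneg_right ?_ (by positivity)
    have h2 : ‖y‖ ^ (i - 1) ≤ R ^ i := by
      calc ‖y‖ ^ (i - 1) ≤ R ^ (i - 1) := pow_le_pow_left₀ (norm_nonneg y) hy.le _
        _ ≤ R ^ i := pow_le_pow_right₀ hR1 (Nat.sub_le i 1)
    calc |β i| * ((i : ℝ) * ‖y‖ ^ (i - 1)) ≤ (C * 2 ^ i) * ((i:ℝ) * R ^ i) := by
          apply mul_le_mul (hβ i) (mul_le_mul_of_nonneg_left h2 (Nat.cast_nonneg i))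
            (by positivity) (by positivity)
      _ = C * (i : ℝ) * (2 * R) ^ i := by rw [mul_pow]; ring
  have hzball : z ∈ Metric.ball (0:ℂ) R := by
    simp [hR, mem_ball, dist_zero_right]
  have key := hasDerivAt_tsum_of_isPreconnected hu_sum Metric.isOpen_ball
    (convex_ball (0:ℂ) R).isPreconnected hgd hbound hzball
    (summable_term β C hβ z) hzball
  have hsum' : Summable (fun i => g' i z) :=
    Summable.of_norm_bounded hu_sum (fun i => hbound i z hzball)
  have : (∑' i, g' i z) = Fser (fun i => β (i + 1)) z := by
    rw [Fser, Summable.tsum_eq_zero_add hsum']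
    have h0 : g' 0 z = 0 := by simp [hg']
    rw [h0, zero_add]
    congr 1; funext i
    have h1 : (Nat.factorial (i+1) : ℂ) = ((i+1 : ℕ) : ℂ) * (Nat.factorial i : ℂ) := by
      rw [Nat.factorial_succ]; push_cast; ring
    have h2 : ((i+1 : ℕ) : ℂ) ≠ 0 := Nat.cast_ne_zero.2 (Nat.succ_ne_zero i)
    have h3 : (Nat.factorial i : ℂ) ≠ 0 := Nat.cast_ne_zero.2 (Nat.factorial_ne_zero i)
    have h4 : (i + 1) - 1 = i := by omega
    simp only [hg', h1, h4]
    rw [mul_div_assoc, mul_div_mul_left _ _ h2, ← mul_div_assoc]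
  rw [← this]
  exact key

lemma fser_iteratedDeriv (β : ℕ → ℝ) (C : ℝ) (hβ : ∀ i, |β i| ≤ C * 2 ^ i) (n : ℕ) :
    iteratedDeriv n (Fser β) = Fser (fun i => β (i + n)) := by
  induction n with
  | zero => simp [iteratedDeriv_zero]
  | succ n ih =>
    rw [iteratedDeriv_succ, ih]
    funext z
    have hshift : ∀ i, |β (i + n)| ≤ (C * 2 ^ n) * 2 ^ i := by
      intro i
      calc |β (i + n)| ≤ C * 2 ^ (i + n) := hβ (i + n)
        _ = (C * 2 ^ n) * 2 ^ i := by rw [pow_add]; ring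
    have := (fser_hasDerivAt (fun i => β (i + n)) (C * 2 ^ n) hshift z).deriv
    rw [this]
    congr 1
    funext i
    congr 1
    omega

lemma fser_zero (β : ℕ → ℝ) : Fser β 0 = (β 0 : ℂ) := by
  rw [Fser, tsum_eq_single 0]
  · simp
  · intro i hi
    simp [zero_pow hi]


noncomputable def Eexp (x : ℝ) : ℝ := ∑' i : ℕ, x ^ i / (Nat.factorial i : ℝ)

lemma Eexp_nonneg (x : ℝ) (hx : 0 ≤ x) : 0 ≤ Eexp x :=
  tsum_nonneg (fun i => by positivity)

lemma fser_uniform_bound (β : ℕ → ℝ) (C : ℝ) (hC : 0 ≤ C) (hβ : ∀ i, |β i| ≤ C * 2 ^ i)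
    (m : ℝ) (z : ℂ) (hz : ‖z‖ ≤ m) : ‖Fser β z‖ ≤ C * Eexp (2 * m) := by
  have hm : 0 ≤ m := le_trans (norm_nonneg z) hz
  have hsum : HasSum (fun i : ℕ => C * ((2 * m) ^ i / (Nat.factorial i : ℝ)))
      (C * Eexp (2 * m)) := (Real.summable_pow_div_factorial (2 * m)).hasSum.mul_left C
  apply tsum_of_norm_bounded hsum
  intro i
  rw [term_norm]
  calc |β i| * ‖z‖ ^ i / (Nat.factorial i : ℝ)
      ≤ (C * 2 ^ i) * m ^ i / (Nat.factorial i : ℝ) := by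
        apply div_le_div_of_nonneg_right ?_ (by positivity)
        exact mul_le_mul (hβ i) (pow_le_pow_left₀ (norm_nonneg z) hz i) (by positivity)
          (by positivity)
    _ = C * ((2 * m) ^ i / (Nat.factorial i : ℝ)) := by rw [mul_pow]; ring

lemma fser_tail_bound (β : ℕ → ℝ) (d : ℕ) (hβ0 : ∀ i, i < d → β i = 0)
    (hβ : ∀ i, |β i| ≤ 2 ^ i) (m : ℝ) (z : ℂ) (hz : ‖z‖ ≤ m) :
    ‖Fser β z‖ ≤ (2 * m) ^ d / (Nat.factorial d : ℝ) * Eexp (2 * m) := by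
  have hm : 0 ≤ m := le_trans (norm_nonneg z) hz
  have hβ' : ∀ i, |β i| ≤ 1 * 2 ^ i := by simpa using hβ
  have hf : Summable (fun i : ℕ => (β i : ℂ) * z ^ i / (Nat.factorial i : ℂ)) :=
    summable_term β 1 hβ' z
  rw [Fser, ← Summable.sum_add_tsum_nat_add d hf]
  have hzero : ∑ i ∈ Finset.range d, (β i : ℂ) * z ^ i / (Nat.factorial i : ℂ) = 0 := by
    apply Finset.sum_eq_zero
    intro i hi
    rw [hβ0 i (Finset.mem_range.1 hi)]
    simp
  rw [hzero, zero_add]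
  have hsum : HasSum (fun i : ℕ => (2 * m) ^ d / (Nat.factorial d : ℝ) *
      ((2 * m) ^ i / (Nat.factorial i : ℝ)))
      ((2 * m) ^ d / (Nat.factorial d : ℝ) * Eexp (2 * m)) :=
    (Real.summable_pow_div_factorial (2 * m)).hasSum.mul_left _
  apply tsum_of_norm_bounded hsum
  intro i
  rw [term_norm]
  have hfac : (Nat.factorial d : ℝ) * (Nat.factorial i : ℝ) ≤ (Nat.factorial (i + d) : ℝ) := by
    have h1 : Nat.factorial d * Nat.factorial i ∣ Nat.factorial (d + i) :=
      Nat.factorial_mul_factorial_dvd_factorial_add d i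
    have h2 : Nat.factorial d * Nat.factorial i ≤ Nat.factorial (d + i) :=
      Nat.le_of_dvd (Nat.factorial_pos _) h1
    rw [Nat.add_comm d i] at h2
    exact_mod_cast h2
  calc |β (i + d)| * ‖z‖ ^ (i + d) / (Nat.factorial (i + d) : ℝ)
      ≤ 2 ^ (i + d) * m ^ (i + d) / (Nat.factorial (i + d) : ℝ) := by
        apply div_le_div_of_nonneg_right ?_ (by positivity)
        exact mul_le_mul (hβ (i + d)) (pow_le_pow_left₀ (norm_nonneg z) hz _) (by positivity)
          (by positivity)
    _ = (2 * m) ^ (i + d) / (Nat.factorial (i + d) : ℝ) := by rw [mul_pow]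
    _ ≤ (2 * m) ^ (i + d) / ((Nat.factorial d : ℝ) * (Nat.factorial i : ℝ)) := by
        apply div_le_div_of_nonneg_left (by positivity) (by positivity) hfac
    _ = (2 * m) ^ d / (Nat.factorial d : ℝ) * ((2 * m) ^ i / (Nat.factorial i : ℝ)) := by
        rw [pow_add]
        field_simp

lemma pow_div_factorial_anti (x : ℝ) (hx : 0 ≤ x) (n d : ℕ) (hnd : n ≤ d) (hxn : x ≤ n) :
    x ^ d / (Nat.factorial d : ℝ) ≤ x ^ n / (Nat.factorial n : ℝ) := by
  induction d, hnd using Nat.le_induction with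
  | base => exact le_refl _
  | succ d hd ih =>
    calc x ^ (d + 1) / (Nat.factorial (d + 1) : ℝ)
        = (x ^ d / (Nat.factorial d : ℝ)) * (x / (d + 1)) := by
          rw [Nat.factorial_succ, pow_succ]
          push_cast
          rw [div_mul_div_comm]
          ring
      _ ≤ (x ^ n / (Nat.factorial n : ℝ)) * 1 := by
          apply mul_le_mul ih ?_ (by positivity) (by positivity)
          rw [div_le_one (by positivity)]
          calc x ≤ (n : ℝ) := hxn
            _ ≤ (d : ℝ) + 1 := by exact_mod_cast Nat.le_succ_of_le hd
      _ = x ^ n / (Nat.factorial n : ℝ) := mul_one _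

lemma supD_le (f : ℂ → ℂ) (m : ℝ) (hm : 0 ≤ m) (K : ℝ) (hK : 0 ≤ K)
    (h : ∀ z ∈ Metric.closedBall (0:ℂ) m, ‖f z‖ ≤ K) : supD f m ≤ K := by
  apply Real.sSup_le ?_ hK
  rintro x ⟨z, hz, rfl⟩
  exact h z hz

lemma le_supD (f : ℂ → ℂ) (m : ℝ) (hm : 0 ≤ m) (K : ℝ)
    (h : ∀ z ∈ Metric.closedBall (0:ℂ) m, ‖f z‖ ≤ K) : ‖f 0‖ ≤ supD f m := by
  apply le_csSup ⟨K, ?_⟩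
  · exact Set.mem_image_of_mem _ (Metric.mem_closedBall_self hm)
  · rintro x ⟨z, hz, rfl⟩
    exact h z hz


noncomputable def eSeq (T : ℕ → ℕ) : ℕ → ℕ
  | 0 => 0
  | j+1 => (j+2) * ((j+1) * (max (T (j+1)) (2 * eSeq T j + j + 2)) + 1)

noncomputable def aSeq (T : ℕ → ℕ) (j : ℕ) : ℕ := max (T (j+1)) (2 * eSeq T j + j + 2)

noncomputable def bSeq (T : ℕ → ℕ) (j : ℕ) : ℕ := (j+1) * aSeq T j

variable (T : ℕ → ℕ)

lemma eSeq_succ (j : ℕ) : eSeq T (j+1) = (j+2) * (bSeq T j + 1) := rfl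

lemma ha_ge (j : ℕ) : 2 * eSeq T j + j + 2 ≤ aSeq T j := le_max_right _ _

lemma ha_T (j : ℕ) : T (j+1) ≤ aSeq T j := le_max_left _ _

lemma hab (j : ℕ) : aSeq T j ≤ bSeq T j := by
  have : 1 * aSeq T j ≤ (j+1) * aSeq T j := Nat.mul_le_mul_right _ (by omega)
  simpa [bSeq] using this

lemma hbe (j : ℕ) : bSeq T j < eSeq T (j+1) := by
  rw [eSeq_succ]
  calc bSeq T j < bSeq T j + 1 := Nat.lt_succ_self _
    _ = 1 * (bSeq T j + 1) := (one_mul _).symm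
    _ ≤ (j+2) * (bSeq T j + 1) := Nat.mul_le_mul_right _ (by omega)

lemma hea (j : ℕ) : eSeq T j < aSeq T j := by
  have := ha_ge T j; omega

lemma hj2a (j : ℕ) : j + 2 ≤ aSeq T j := by
  have := ha_ge T j; omega

lemma e_mono : Monotone (eSeq T) := by
  apply monotone_nat_of_le_succ
  intro j
  have h1 := hea T j
  have h2 := hab T j
  have h3 := hbe T j
  omega

lemma b_lt_a {j' j : ℕ} (h : j' < j) : bSeq T j' < aSeq T j := by
  calc bSeq T j' < eSeq T (j'+1) := hbe T j'
    _ ≤ eSeq T j := e_mono T h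
    _ < aSeq T j := hea T j

lemma b_mono : Monotone (bSeq T) := by
  apply monotone_nat_of_le_succ
  intro j
  exact le_trans (le_of_lt (b_lt_a T (Nat.lt_succ_self j))) (hab T _)

lemma a_mono : Monotone (aSeq T) := by
  apply monotone_nat_of_le_succ
  intro j
  exact le_trans (hab T j) (le_of_lt (b_lt_a T (Nat.lt_succ_self j)))

noncomputable def alph (n : ℕ) : ℝ :=
  ∑ j ∈ Finset.range (n+1), if aSeq T j ≤ n ∧ n ≤ bSeq T j then (j+1 : ℝ) else 0

lemma alph_nonneg (n : ℕ) : 0 ≤ alph T n :=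
  Finset.sum_nonneg (fun j _ => by positivity)

lemma alph_block {j n : ℕ} (h1 : aSeq T j ≤ n) (h2 : n ≤ bSeq T j) : alph T n = j + 1 := by
  rw [alph, Finset.sum_eq_single_of_mem j]
  · simp [h1, h2]
  · have : j + 2 ≤ n := le_trans (hj2a T j) h1
    exact Finset.mem_range.2 (by omega)
  · intro j' _ hne
    rcases Nat.lt_or_ge j' j with h | h
    · have : bSeq T j' < n := lt_of_lt_of_le (b_lt_a T h) h1
      simp only [ite_eq_right_iff]
      intro hc; omega
    · have hj : j < j' := by omega
      have : n < aSeq T j' := lt_of_le_of_lt h2 (b_lt_a T hj)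
      simp only [ite_eq_right_iff]
      intro hc; omega

lemma alph_zero {n : ℕ} (h : ∀ j, ¬(aSeq T j ≤ n ∧ n ≤ bSeq T j)) : alph T n = 0 := by
  rw [alph]
  apply Finset.sum_eq_zero
  intro j _
  simp [h j]

lemma alph_cases (n : ℕ) :
    alph T n = 0 ∨ ∃ j, aSeq T j ≤ n ∧ n ≤ bSeq T j ∧ alph T n = j + 1 := by
  by_cases h : ∃ j, aSeq T j ≤ n ∧ n ≤ bSeq T j
  · obtain ⟨j, h1, h2⟩ := h
    exact Or.inr ⟨j, h1, h2, alph_block T h1 h2⟩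
  · push_neg at h
    exact Or.inl (alph_zero T (fun j hc => (h j hc.1).not_ge hc.2))

lemma alph_le (n : ℕ) : alph T n ≤ n := by
  rcases alph_cases T n with h | ⟨j, h1, h2, h3⟩
  · rw [h]; positivity
  · rw [h3]
    have : j + 2 ≤ n := le_trans (hj2a T j) h1
    exact_mod_cast by omega

lemma alph_le_two_pow (n : ℕ) : |alph T n| ≤ 1 * 2 ^ n := by
  rw [abs_of_nonneg (alph_nonneg T n), one_mul]
  calc alph T n ≤ n := alph_le T n
    _ ≤ 2 ^ n := by exact_mod_cast (Nat.lt_two_pow_self (n := n)).le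

-- On the A-region (b j, e (j+1)], the shifted coefficients vanish up to d = a(j+1) - n
lemma alph_A_zero {j n : ℕ} (h1 : bSeq T j < n) (h2 : n ≤ eSeq T (j+1)) :
    ∀ i, i < aSeq T (j+1) - n → alph T (n + i) = 0 := by
  intro i hi
  apply alph_zero
  intro j' ⟨hc1, hc2⟩
  rcases Nat.lt_or_ge j' (j+1) with h | h
  · -- j' ≤ j : block ends before n
    have : bSeq T j' ≤ bSeq T j := b_mono T (by omega)
    omega
  · -- j' ≥ j+1 : block starts after n + i
    have : aSeq T (j+1) ≤ aSeq T j' := a_mono T h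
    omega

lemma alph_A_bound {j n : ℕ} (h1 : bSeq T j < n) (h2 : n ≤ eSeq T (j+1)) :
    ∀ i, |alph T (n + i)| ≤ 2 ^ i := by
  intro i
  rcases alph_cases T (n + i) with h | ⟨j', hc1, hc2, hc3⟩
  · rw [h, abs_zero]; positivity
  · rw [hc3, abs_of_nonneg (by positivity)]
    -- j' ≥ j+1 since n + i > b j
    have hj' : j + 1 ≤ j' := by
      by_contra hcon
      have : bSeq T j' ≤ bSeq T j := b_mono T (by omega)
      omega
    have he : eSeq T (j+1) ≤ eSeq T j' := e_mono T hj'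
    have ha := ha_ge T j'
    -- a j' ≥ 2 e j' + j' + 2 ≥ n + j' + 2, and a j' ≤ n + i so i ≥ j' + 2
    have hi : j' + 2 ≤ i := by omega
    have : (j' + 1 : ℝ) ≤ (i : ℝ) := by exact_mod_cast by omega
    calc (j' : ℝ) + 1 ≤ (i : ℝ) := by exact_mod_cast this
      _ ≤ 2 ^ i := by exact_mod_cast (Nat.lt_two_pow_self (n := i)).le

lemma alph_A_d_ge {j n : ℕ} (h1 : bSeq T j < n) (h2 : n ≤ eSeq T (j+1)) :
    n ≤ aSeq T (j+1) - n := by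
  have ha := ha_ge T (j+1)
  omega

-- B-side : value on a block beyond block J is large
lemma alph_B_large {J j n : ℕ} (h1 : aSeq T j ≤ n) (h2 : n ≤ bSeq T j)
    (h3 : bSeq T J < n) : (J : ℝ) + 1 ≤ alph T n := by
  rw [alph_block T h1 h2]
  have : J < j := by
    by_contra hcon
    have : bSeq T j ≤ bSeq T J := b_mono T (by omega)
    omega
  exact_mod_cast by omega

-- ω bound
lemma alph_le_omega (ω : ℕ → ℝ) (hω0 : ∀ n, 0 ≤ ω n)
    (hT : ∀ c n, T c ≤ n → (c : ℝ) ≤ ω n) (n : ℕ) : alph T n ≤ ω n := by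
  rcases alph_cases T n with h | ⟨j, h1, h2, h3⟩
  · rw [h]; exact hω0 n
  · rw [h3]
    have : T (j+1) ≤ n := le_trans (ha_T T j) h1
    have := hT (j+1) n this
    push_cast at this ⊢
    linarith

open scoped Classical in
lemma upperDensity_eq_one (S : Set ℕ) (u v : ℕ → ℕ)
    (hgrow : ∀ j, (j + 1) * u j ≤ v j) (hvj : ∀ j, j ≤ v j)
    (hsub : ∀ j n, u j < n → n ≤ v j → n ∈ S) : upperDensity S = 1 := by
  set r : ℕ → ℝ := fun N => (((Finset.Icc 1 N).filter (· ∈ S)).card : ℝ) / N with hr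
  have hr0 : ∀ N, 0 ≤ r N := fun N => by positivity
  have hr1 : ∀ N, r N ≤ 1 := by
    intro N
    rcases Nat.eq_zero_or_pos N with h | h
    · simp [hr, h]
    · rw [hr, div_le_one (by exact_mod_cast h)]
      calc (((Finset.Icc 1 N).filter (· ∈ S)).card : ℝ)
          ≤ ((Finset.Icc 1 N).card : ℝ) := by
            exact_mod_cast Finset.card_le_card (Finset.filter_subset _ _)
        _ = N := by rw [Nat.card_Icc]; simp
  have hub : IsBoundedUnder (· ≤ ·) atTop r := isBoundedUnder_of ⟨1, hr1⟩
  have hlb : IsBoundedUnder (· ≥ ·) atTop r := isBoundedUnder_of ⟨0, hr0⟩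
  apply le_antisymm
  · exact limsup_le_of_le hlb.isCoboundedUnder_le (Eventually.of_forall hr1)
  · -- 1 ≤ limsup
    by_contra hcon
    push_neg at hcon
    set ε : ℝ := 1 - upperDensity S with hε
    have hε0 : 0 < ε := by simp [hε]; linarith [hcon]
    have key : ∀ δ : ℝ, 0 < δ → (1 - δ : ℝ) ≤ upperDensity S := by
      intro δ hδ
      apply le_limsup_of_frequently_le ?_ hub
      rw [frequently_atTop]
      intro N₀
      set j : ℕ := max (max N₀ ⌈1/δ⌉₊) 1 with hj
      have hj1 : 1 ≤ j := le_max_right _ _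
      have hjN : N₀ ≤ j := le_trans (le_max_left _ _) (le_max_left _ _)
      have hjδ : 1/δ ≤ (j : ℝ) + 1 := by
        calc 1/δ ≤ (⌈1/δ⌉₊ : ℝ) := Nat.le_ceil _
          _ ≤ (j : ℝ) := by exact_mod_cast le_trans (le_max_right N₀ _) (le_max_left _ 1)
          _ ≤ (j : ℝ) + 1 := by linarith
      refine ⟨v j, le_trans hjN (hvj j), ?_⟩
      -- count : Icc (u j + 1) (v j) ⊆ filter
      have huv : u j ≤ v j := by
        have := hgrow j
        nlinarith [Nat.zero_le (u j)]
      have hvpos : 0 < v j := lt_of_lt_of_le hj1 (hvj j)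
      have hsubset : Finset.Icc (u j + 1) (v j) ⊆ (Finset.Icc 1 (v j)).filter (· ∈ S) := by
        intro n hn
        rw [Finset.mem_Icc] at hn
        rw [Finset.mem_filter, Finset.mem_Icc]
        exact ⟨⟨by omega, hn.2⟩, hsub j n (by omega) hn.2⟩
      have hcard : ((v j : ℝ) - u j) ≤ (((Finset.Icc 1 (v j)).filter (· ∈ S)).card : ℝ) := by
        have h1 : (Finset.Icc (u j + 1) (v j)).card = v j - u j := by
          rw [Nat.card_Icc]; omega
        have h2 := Finset.card_le_card hsubset
        rw [h1] at h2
        have : ((v j - u j : ℕ) : ℝ) = (v j : ℝ) - u j := by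
          push_cast [Nat.cast_sub huv]; ring
        rw [← this]
        exact_mod_cast h2
      have hV : (0 : ℝ) < (v j : ℝ) := by exact_mod_cast hvpos
      rw [hr]
      rw [le_div_iff₀ hV]
      have hUV : (u j : ℝ) ≤ (v j : ℝ) / ((j : ℝ) + 1) := by
        rw [le_div_iff₀ (by positivity)]
        have := hgrow j
        have : ((j + 1 : ℕ) : ℝ) * (u j : ℝ) ≤ (v j : ℝ) := by exact_mod_cast this
        push_cast at this
        linarith
      have h1 : (1:ℝ) ≤ ((j:ℝ) + 1) * δ := by rwa [div_le_iff₀ hδ] at hjδ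
      have hδj : (v j : ℝ) / ((j : ℝ) + 1) ≤ δ * v j := by
        rw [div_le_iff₀ (by positivity : (0:ℝ) < (j:ℝ)+1)]
        nlinarith [mul_le_mul_of_nonneg_left h1 hV.le]
      have : (u j : ℝ) ≤ δ * v j := le_trans hUV hδj
      calc (1 - δ) * (v j : ℝ) = (v j : ℝ) - δ * v j := by ring
        _ ≤ (v j : ℝ) - u j := by linarith
        _ ≤ _ := hcard
    have := key (ε/2) (by linarith)
    rw [hε] at this
    linarith

theorem stmt6 (ω : ℕ → ℝ) (hω0 : ∀ n, 0 ≤ ω n) (hω : Tendsto ω atTop atTop) :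
    ∃ f : ℂ → ℂ, Differentiable ℂ f ∧
      (∀ n : ℕ, 1 ≤ n → ‖iteratedDeriv n f 0‖ ≤ ω n) ∧
      ∃ A B : Set ℕ, upperDensity A = 1 ∧ upperDensity B = 1 ∧
        (∀ m : ℕ, Tendsto (fun n : ℕ => supD (iteratedDeriv n f) m)
          (atTop ⊓ 𝓟 A) (nhds 0)) ∧
        (∀ m : ℕ, Tendsto (fun n : ℕ => supD (iteratedDeriv n f) m)
          (atTop ⊓ 𝓟 B) atTop) := by
  have hT' : ∀ c : ℕ, ∃ N, ∀ n ≥ N, (c:ℝ) ≤ ω n :=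
    fun c => eventually_atTop.1 (hω.eventually_ge_atTop (c:ℝ))
  choose T hT using hT'
  set α : ℕ → ℝ := alph T with hα
  have hα2 : ∀ i, |α i| ≤ 1 * 2 ^ i := alph_le_two_pow T
  have hshift : ∀ n, ∀ i, |α (i + n)| ≤ (2 ^ n : ℝ) * 2 ^ i := by
    intro n i
    calc |α (i + n)| ≤ 1 * 2 ^ (i + n) := hα2 (i + n)
      _ = (2 ^ n : ℝ) * 2 ^ i := by rw [pow_add]; ring
  have hiter : ∀ n, iteratedDeriv n (Fser α) = Fser (fun i => α (i + n)) :=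
    fun n => fser_iteratedDeriv α 1 hα2 n
  have hiter0 : ∀ n, iteratedDeriv n (Fser α) 0 = (α n : ℂ) := by
    intro n
    rw [hiter n, fser_zero]
    norm_num
  -- uniform bound on closed balls
  have hunif : ∀ n : ℕ, ∀ m : ℝ, 0 ≤ m → ∀ z ∈ Metric.closedBall (0:ℂ) m,
      ‖iteratedDeriv n (Fser α) z‖ ≤ (2 ^ n : ℝ) * Eexp (2 * m) := by
    intro n m hm z hz
    rw [Metric.mem_closedBall, dist_zero_right] at hz
    rw [hiter n]
    exact fser_uniform_bound _ _ (by positivity) (hshift n) m z hz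
  have hsupD_ge : ∀ n : ℕ, ∀ m : ℝ, 0 ≤ m →
      α n ≤ supD (iteratedDeriv n (Fser α)) m := by
    intro n m hm
    have h := le_supD (iteratedDeriv n (Fser α)) m hm _ (hunif n m hm)
    rw [hiter0 n] at h
    rw [Complex.norm_real, Real.norm_eq_abs, abs_of_nonneg (alph_nonneg T n)] at h
    exact h
  refine ⟨Fser α, ?_, ?_, ?_⟩
  · exact fun z => (fser_hasDerivAt α 1 hα2 z).differentiableAt
  · intro n _
    rw [hiter0 n, Complex.norm_real, Real.norm_eq_abs, abs_of_nonneg (alph_nonneg T n)]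
    exact alph_le_omega T ω hω0 (fun c n h => hT c n h) n
  · refine ⟨{n | ∃ j, bSeq T j < n ∧ n ≤ eSeq T (j+1)},
      {n | ∃ j, aSeq T j ≤ n ∧ n ≤ bSeq T j}, ?_, ?_, ?_, ?_⟩
    · -- upper density of A
      apply upperDensity_eq_one _ (fun j => bSeq T j) (fun j => eSeq T (j+1))
      · intro j
        rw [eSeq_succ]
        calc (j+1) * bSeq T j ≤ (j+2) * bSeq T j := Nat.mul_le_mul_right _ (by omega)
          _ ≤ (j+2) * (bSeq T j + 1) := Nat.mul_le_mul_left _ (by omega)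
      · intro j
        have h1 : j + 2 ≤ (j+2) * (bSeq T j + 1) := Nat.le_mul_of_pos_right _ (by omega)
        rw [eSeq_succ]; omega
      · intro j n h1 h2
        exact ⟨j, h1, h2⟩
    · -- upper density of B
      apply upperDensity_eq_one _ (fun j => aSeq T j) (fun j => bSeq T j)
      · intro j; exact le_of_eq rfl
      · intro j
        have := hj2a T j
        have := hab T j
        omega
      · intro j n h1 h2
        exact ⟨j, le_of_lt h1, h2⟩
    · -- A-side : tendsto 0
      intro m
      have hm0 : (0:ℝ) ≤ (m:ℝ) := Nat.cast_nonneg m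
      apply squeeze_zero'
      · apply Eventually.of_forall
        intro n
        exact le_trans (norm_nonneg _)
          (le_supD _ _ hm0 _ (hunif n m hm0))
      · rw [eventually_inf_principal]
        filter_upwards [eventually_ge_atTop (2*m+1)] with n hn hnA
        obtain ⟨j, hj1, hj2⟩ := hnA
        set d : ℕ := aSeq T (j+1) - n with hd
        have hdn : n ≤ d := alph_A_d_ge T hj1 hj2
        have hx : (2*(m:ℝ)) ≤ (n:ℝ) := by
          have h' : ((2*m+1 : ℕ) : ℝ) ≤ (n : ℝ) := Nat.cast_le.2 hn
          push_cast at h'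
          linarith
        have htail : ∀ z ∈ Metric.closedBall (0:ℂ) (m:ℝ),
            ‖iteratedDeriv n (Fser α) z‖ ≤
              (2*(m:ℝ)) ^ d / (Nat.factorial d : ℝ) * Eexp (2*(m:ℝ)) := by
          intro z hz
          rw [Metric.mem_closedBall, dist_zero_right] at hz
          rw [hiter n]
          apply fser_tail_bound _ d ?_ ?_ _ z hz
          · intro i hi
            have := alph_A_zero T hj1 hj2 i (by omega)
            rwa [Nat.add_comm] at this
          · intro i
            have := alph_A_bound T hj1 hj2 i
            rwa [Nat.add_comm] at this
        calc supD (iteratedDeriv n (Fser α)) (m:ℝ)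
            ≤ (2*(m:ℝ)) ^ d / (Nat.factorial d : ℝ) * Eexp (2*(m:ℝ)) :=
              supD_le _ _ hm0 _
                (mul_nonneg (by positivity) (Eexp_nonneg _ (by positivity))) htail
          _ ≤ (2*(m:ℝ)) ^ n / (Nat.factorial n : ℝ) * Eexp (2*(m:ℝ)) := by
              apply mul_le_mul_of_nonneg_right
                (pow_div_factorial_anti _ (by positivity) n d hdn hx)
                (Eexp_nonneg _ (by positivity))
      · have h1 : Tendsto (fun n : ℕ => (2*(m:ℝ)) ^ n / (Nat.factorial n : ℝ) *
            Eexp (2*(m:ℝ))) atTop (nhds 0) := by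
          have := (FloorSemiring.tendsto_pow_div_factorial_atTop (2*(m:ℝ))).mul_const
            (Eexp (2*(m:ℝ)))
          simpa using this
        exact h1.mono_left inf_le_left
    · -- B-side : tendsto atTop
      intro m
      have hm0 : (0:ℝ) ≤ (m:ℝ) := Nat.cast_nonneg m
      rw [Filter.tendsto_atTop]
      intro C
      rw [eventually_inf_principal]
      filter_upwards [eventually_ge_atTop (bSeq T ⌈C⌉₊ + 1)] with n hn hnB
      obtain ⟨j, hj1, hj2⟩ := hnB
      have hlarge : ((⌈C⌉₊ : ℝ)) + 1 ≤ α n := alph_B_large T hj1 hj2 (by omega)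
      have hC : C ≤ α n := by
        have := Nat.le_ceil C
        linarith
      exact le_trans hC (hsupD_ge n m hm0)
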